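/- For n ≥ 4, any set V' of two vertices in the folded hypercube FQ_n has at least 2n neighbours outside V', i.e., |N_{FQ_n}(V')| ≥ 2n. -/

import Mathlib

/-- The `n`-dimensional folded hypercube: vertices are binary strings of length `n`,
adjacent iff they differ in exactly one coordinate or in all coordinates. -/
def foldedCube (n : ℕ) : SimpleGraph (Fin n → Bool) :=
  SimpleGraph.fromRel (fun u v =>
    (Finset.univ.filter (fun i => u i ≠ v i)).card = 1 ∨ ∀ i, u i ≠ v i)

/-- External neighbourhood of a vertex set. -/
def extNbhd {V : Type*} (G : SimpleGraph V) (S : Set V) : Set V :=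
  {w | w ∉ S ∧ ∃ v ∈ S, G.Adj v w}

namespace Stmt3Aux

variable {n : ℕ}

def flip (u : Fin n → Bool) (i : Fin n) : Fin n → Bool := Function.update u i (!(u i))

def comp (u : Fin n → Bool) : Fin n → Bool := fun j => !(u j)

def diff (u v : Fin n → Bool) : Finset (Fin n) := Finset.univ.filter fun i => u i ≠ v i

def nb (u : Fin n → Bool) : Finset (Fin n → Bool) :=
  (Finset.univ.image (flip u)) ∪ {comp u}

lemma flip_apply (u : Fin n → Bool) (i l : Fin n) :
    flip u i l = if l = i then !(u i) else u l := Function.update_apply ..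

lemma flip_ne (u : Fin n → Bool) (i : Fin n) : flip u i ≠ u := by
  intro h
  have := congrFun h i
  simp [flip_apply] at this

lemma comp_ne (hn : 0 < n) (u : Fin n → Bool) : comp u ≠ u := by
  intro h
  have := congrFun h ⟨0, hn⟩
  simp [comp] at this

lemma diff_comm (u v : Fin n → Bool) : diff u v = diff v u := by
  simp [diff, ne_comm]

lemma diff_flip (u : Fin n → Bool) (i : Fin n) : diff u (flip u i) = {i} := by
  ext l
  by_cases h : l = i <;> simp [diff, flip_apply, h]

lemma flip_eq_flip {u v : Fin n → Bool} {i j : Fin n} (hne : u ≠ v)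
    (h : flip u i = flip v j) : i ≠ j ∧ diff u v = {i, j} := by
  have key : ∀ l, flip u i l = flip v j l := fun l => congrFun h l
  have hij : i ≠ j := by
    rintro rfl
    apply hne
    funext l
    have := key l
    by_cases hl : l = i <;> simp [flip_apply, hl] at this <;> simp [this, hl]
  refine ⟨hij, ?_⟩
  ext l
  rcases eq_or_ne l i with rfl | hli
  · have := key l
    simp [flip_apply, hij] at this
    simp [diff, hij, this]
  rcases eq_or_ne l j with rfl | hlj
  · have := key l
    simp [flip_apply, hli, Ne.symm hij] at this
    simp [diff, hli, this]
  · have := key l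
    simp [flip_apply, hli, hlj] at this
    simp [diff, hli, hlj, this]

lemma flip_eq_comp {u v : Fin n → Bool} {i : Fin n}
    (h : flip u i = comp v) : diff u v = {i}ᶜ := by
  have key : ∀ l, flip u i l = comp v l := fun l => congrFun h l
  ext l
  rcases eq_or_ne l i with rfl | hli
  · have := key l
    simp [flip_apply, comp] at this
    simp [diff, this]
  · have := key l
    simp [flip_apply, comp, hli] at this
    simp [diff, hli, this]

lemma comp_inj {u v : Fin n → Bool} (h : comp u = comp v) : u = v := by
  funext l
  have := congrFun h l
  simpa [comp] using this

lemma mem_nb {u w : Fin n → Bool} :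
    w ∈ nb u ↔ (∃ i, flip u i = w) ∨ w = comp u := by
  simp [nb]
  exact or_comm

lemma inter_mem {u v : Fin n → Bool} (hne : u ≠ v) {w : Fin n → Bool}
    (hw : w ∈ nb u ∩ nb v) :
    ((∃ i ∈ diff u v, w = flip u i) ∧ (diff u v).card = 2) ∨
      ((w = comp u ∨ w = comp v) ∧ (diff u v).card = n - 1) := by
  rw [Finset.mem_inter, mem_nb, mem_nb] at hw
  obtain ⟨hu, hv⟩ := hw
  rcases hu with ⟨i, rfl⟩ | rfl
  · rcases hv with ⟨j, hj⟩ | hc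
    · obtain ⟨hij, hd⟩ := flip_eq_flip hne hj.symm
      left
      constructor
      · exact ⟨i, by simp [hd], rfl⟩
      · rw [hd, Finset.card_insert_of_notMem (by simp [hij]), Finset.card_singleton]
    · right
      have hd := flip_eq_comp hc
      refine ⟨Or.inr hc, ?_⟩
      rw [hd, Finset.card_compl, Finset.card_singleton, Fintype.card_fin]
  · rcases hv with ⟨j, hj⟩ | hc
    · right
      have hd := flip_eq_comp (v := u) hj
      rw [diff_comm] at hd
      refine ⟨Or.inl rfl, ?_⟩
      rw [hd, Finset.card_compl, Finset.card_singleton, Fintype.card_fin]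
    · exact absurd (comp_inj hc) hne

lemma adj_iff {u v : Fin n → Bool} :
    (foldedCube n).Adj u v ↔ u ≠ v ∧ ((diff u v).card = 1 ∨ ∀ i, u i ≠ v i) := by
  rw [foldedCube, SimpleGraph.fromRel_adj]
  constructor
  · rintro ⟨h1, h2 | h2⟩
    · exact ⟨h1, h2.imp (fun h => h) (fun h => h)⟩
    · refine ⟨h1, h2.imp ?_ ?_⟩
      · intro h
        rw [diff_comm]
        exact h
      · intro h i
        exact (h i).symm
  · rintro ⟨h1, h2⟩
    exact ⟨h1, Or.inl h2⟩

lemma adj_of_mem_nb (hn : 0 < n) {u w : Fin n → Bool} (h : w ∈ nb u) :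
    (foldedCube n).Adj u w := by
  rw [mem_nb] at h
  rcases h with ⟨i, rfl⟩ | rfl
  · refine adj_iff.2 ⟨(flip_ne u i).symm, Or.inl ?_⟩
    rw [diff_flip, Finset.card_singleton]
  · exact adj_iff.2 ⟨(comp_ne hn u).symm, Or.inr fun i => by simp [comp]⟩

lemma card_nb (hn : 2 ≤ n) (u : Fin n → Bool) : (nb u).card = n + 1 := by
  rw [nb, Finset.card_union_of_disjoint, Finset.card_singleton,
    Finset.card_image_of_injective _ ?inj, Finset.card_univ, Fintype.card_fin]
  case inj =>
    intro i j hij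
    by_contra hne
    have h1 := congrFun hij i
    simp [flip_apply, hne] at h1
  · rw [Finset.disjoint_singleton_right, Finset.mem_image]
    rintro ⟨i, -, hi⟩
    have : Nontrivial (Fin n) := Fin.nontrivial_iff_two_le.mpr hn
    obtain ⟨j, hj⟩ := exists_ne i
    have := congrFun hi j
    simp [flip_apply, hj, comp] at this

lemma inter_card_le (hn : 4 ≤ n) {u v : Fin n → Bool} (hne : u ≠ v) :
    (nb u ∩ nb v).card ≤ 2 := by
  rcases eq_or_ne (diff u v).card 2 with h2 | h2
  · have hsub : nb u ∩ nb v ⊆ (diff u v).image (flip u) := by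
      intro w hw
      rcases inter_mem hne hw with ⟨⟨i, hi, rfl⟩, -⟩ | ⟨-, hd⟩
      · exact Finset.mem_image.2 ⟨i, hi, rfl⟩
      · omega
    calc (nb u ∩ nb v).card ≤ ((diff u v).image (flip u)).card := Finset.card_le_card hsub
      _ ≤ (diff u v).card := Finset.card_image_le
      _ = 2 := h2
  · have hsub : nb u ∩ nb v ⊆ {comp u, comp v} := by
      intro w hw
      rcases inter_mem hne hw with ⟨-, hd⟩ | ⟨hc, -⟩
      · omega
      · simp [hc]
    calc (nb u ∩ nb v).card ≤ ({comp u, comp v} : Finset _).card := Finset.card_le_card hsub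
      _ ≤ 2 := Finset.card_insert_le _ _ |>.trans (by simp)

lemma inter_empty_of_adj (hn : 4 ≤ n) {u v : Fin n → Bool}
    (h : (foldedCube n).Adj u v) : nb u ∩ nb v = ∅ := by
  obtain ⟨hne, hd⟩ := adj_iff.1 h
  have hd' : (diff u v).card = 1 ∨ (diff u v).card = n := by
    rcases hd with h1 | h1
    · exact Or.inl h1
    · right
      have : diff u v = Finset.univ := by
        ext l; simp [diff, h1 l]
      rw [this, Finset.card_univ, Fintype.card_fin]
  rw [Finset.eq_empty_iff_forall_notMem]
  intro w hw
  rcases inter_mem hne hw with ⟨-, hc⟩ | ⟨-, hc⟩ <;> omega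

end Stmt3Aux

open Stmt3Aux in
theorem stmt3 (n : ℕ) (hn : 4 ≤ n) (V' : Finset (Fin n → Bool)) (hV' : V'.card = 2) :
    2 * n ≤ (extNbhd (foldedCube n) (↑V' : Set (Fin n → Bool))).ncard := by
  obtain ⟨u, v, hne, rfl⟩ := Finset.card_eq_two.1 hV'
  have hn0 : 0 < n := by omega
  set F : Finset (Fin n → Bool) := (nb u ∪ nb v) \ {u, v} with hF
  have hsub : (↑F : Set (Fin n → Bool)) ⊆ extNbhd (foldedCube n) (↑({u, v} : Finset _)) := by
    intro w hw
    rw [Finset.coe_sdiff] at hw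
    obtain ⟨hw1, hw2⟩ := hw
    refine ⟨by simpa using hw2, ?_⟩
    rcases Finset.mem_union.1 (by exact_mod_cast hw1) with h | h
    · exact ⟨u, by simp, adj_of_mem_nb hn0 h⟩
    · exact ⟨v, by simp, adj_of_mem_nb hn0 h⟩
  have hcard : 2 * n ≤ F.card := by
    have hunion : (nb u ∪ nb v).card + (nb u ∩ nb v).card = (n + 1) + (n + 1) := by
      rw [Finset.card_union_add_card_inter, card_nb (by omega) u, card_nb (by omega) v]
    by_cases hadj : (foldedCube n).Adj u v
    · have h0 : (nb u ∩ nb v).card = 0 := by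
        rw [inter_empty_of_adj hn hadj]; rfl
      have h1 : (nb u ∪ nb v).card ≤ F.card + ({u, v} : Finset _).card :=
        Finset.card_le_card_sdiff_add_card
      have h2 : ({u, v} : Finset (Fin n → Bool)).card ≤ 2 :=
        (Finset.card_insert_le _ _).trans (by simp)
      omega
    · have hu : u ∉ nb u ∪ nb v := by
        intro h
        rcases Finset.mem_union.1 h with h | h
        · exact (adj_of_mem_nb hn0 h).ne rfl
        · exact hadj ((adj_of_mem_nb hn0 h).symm)
      have hv : v ∉ nb u ∪ nb v := by
        intro h
        rcases Finset.mem_union.1 h with h | h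
        · exact hadj (adj_of_mem_nb hn0 h)
        · exact (adj_of_mem_nb hn0 h).ne rfl
      have hFeq : F = nb u ∪ nb v := by
        rw [hF, Finset.sdiff_eq_self_iff_disjoint]
        simp only [Finset.disjoint_left, Finset.mem_union, Finset.mem_insert,
          Finset.mem_singleton, not_or]
        rintro a ha
        constructor <;> rintro rfl
        · exact hu (Finset.mem_union.2 ha)
        · exact hv (Finset.mem_union.2 ha)
      have := inter_card_le hn hne
      rw [hFeq]
      omega
  calc 2 * n ≤ F.card := hcard
    _ = (↑F : Set (Fin n → Bool)).ncard := (Set.ncard_coe_finset F).symm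
    _ ≤ _ := Set.ncard_le_ncard hsub (Set.toFinite _)
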